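/- Suppose k₂ ≠ 0, k₁ + k₂ ≠ 0 and x₀,₁ ≠ 0 (the first coordinate of x₀ is nonzero). If C(A')ʲ x₀' = C Aʲ x₀ for j = 0, 1, 2, then k₁' = k₁, k₂' = k₂ and x₀' = x₀. -/

import Mathlib

open Matrix Set
open scoped Matrix

noncomputable section

/-- identifiability of the toy model from the first three output
derivatives. If `k₂ ≠ 0`, `k₁ + k₂ ≠ 0` and the first coordinate of `x₀` is nonzero,
and if `C (A')ʲ x₀' = C Aʲ x₀` for `j = 0, 1, 2`, then the parameters and initial
condition coincide. -/
theorem statement6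
    (k₁ k₂ k₁' k₂' : ℝ) (x₀ x₀' : Fin 3 → ℝ)
    (A A' : Matrix (Fin 3) (Fin 3) ℝ)
    (hA : A = !![-(k₁ + k₂), 0, 0; k₁, 0, 0; k₂, 0, 0])
    (hA' : A' = !![-(k₁' + k₂'), 0, 0; k₁', 0, 0; k₂', 0, 0])
    (C : Matrix (Fin 2) (Fin 3) ℝ)
    (hC : C = !![0, 1, 0; 0, 0, 1])
    (hk₂ : k₂ ≠ 0) (hsum : k₁ + k₂ ≠ 0) (hx₀ : x₀ 0 ≠ 0)
    (hobs : ∀ j : ℕ, j ≤ 2 →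
      C.mulVec ((A' ^ j).mulVec x₀') = C.mulVec ((A ^ j).mulVec x₀)) :
    k₁' = k₁ ∧ k₂' = k₂ ∧ x₀' = x₀ := by
  have h0 := hobs 0 (by norm_num)
  have h1 := hobs 1 (by norm_num)
  have h2 := hobs 2 (by norm_num)
  subst hA hA' hC
  simp only [pow_zero, pow_one, pow_two, Matrix.one_mulVec, Matrix.mulVec_mulVec] at h0 h1 h2
  have e01 := congrFun h0 0
  have e02 := congrFun h0 1
  have e11 := congrFun h1 0
  have e12 := congrFun h1 1
  have e21 := congrFun h2 0
  have e22 := congrFun h2 1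
  simp [Matrix.mulVec, Matrix.mul_apply, dotProduct, Fin.sum_univ_succ, Matrix.vecHead, Matrix.vecTail] at e01 e02 e11 e12 e21 e22
  -- e11 : k₁' * x₀' 0 = k₁ * x₀ 0, e12 : k₂' * x₀' 0 = k₂ * x₀ 0
  -- e21, e22 : second order
  have hx0' : x₀' 0 ≠ 0 := by
    intro h; apply hk₂; rw [h] at e12; simp at e12
    rcases e12 with h | h
    · exact h
    · exact absurd h hx₀
  have hk2' : k₂' ≠ 0 := by
    intro h; apply hk₂; rw [h] at e12; simp at e12
    rcases e12 with h | h
    · exact h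
    · exact absurd h hx₀
  have hsum' : k₁' + k₂' = k₁ + k₂ := by
    have key : k₂' * x₀' 0 * (k₁' + k₂') = k₂' * x₀' 0 * (k₁ + k₂) := by
      linear_combination -e22 - (k₁ + k₂) * e12
    exact mul_left_cancel₀ (mul_ne_zero hk2' hx0') key
  have hx1 : x₀' 0 = x₀ 0 := by
    have key : (k₁ + k₂) * x₀' 0 = (k₁ + k₂) * x₀ 0 := by
      linear_combination e11 + e12 - x₀' 0 * hsum'
    exact mul_left_cancel₀ hsum key
  have hk1 : k₁' = k₁ := by
    rw [hx1] at e11; exact mul_right_cancel₀ hx₀ e11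
  have hk2 : k₂' = k₂ := by
    rw [hx1] at e12; exact mul_right_cancel₀ hx₀ e12
  refine ⟨hk1, hk2, funext fun i => ?_⟩
  fin_cases i
  · exact hx1
  · exact e01
  · exact e02
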